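/- Let F : H → H be L-Lipschitz, let G : H → 2^H be maximally monotone, and suppose the sum operator T, defined by T(x) = {F(x) + g : g ∈ G(x)}, is ρ-comonotone with ρ > −1/(2L). Then the operator x ↦ {(1/(2L))·u : u ∈ T(x)} is maximally 2Lρ-comonotone. -/

import Mathlib

open RealInnerProductSpace Filter Topology

section Aux

variable {H : Type*} [NormedAddCommGroup H] [InnerProductSpace ℝ H]

/-- The Fitzpatrick-type integrand. -/
private noncomputable def gfun (y v a b : H) : ℝ :=
  ⟪a, v⟫ + ⟪y, b⟫ - ⟪y, v⟫ + ‖a‖^2/2 + ‖b‖^2/2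

private lemma convex_norm_sq (t : ℝ) (x y : H) :
    ‖x + t • (y - x)‖^2 = (1-t)*‖x‖^2 + t*‖y‖^2 - t*(1-t)*‖y - x‖^2 := by
  have h1 := norm_add_sq_real x (t • (y - x))
  have h2 := norm_sub_sq_real y x
  have h3 : ‖t • (y - x)‖^2 = t^2 * ‖y - x‖^2 := by
    rw [norm_smul, mul_pow, Real.norm_eq_abs, sq_abs]
  have h4 : ⟪x, t • (y - x)⟫ = t * (⟪x, y⟫ - ‖x‖^2) := by
    rw [real_inner_smul_right, inner_sub_right, real_inner_self_eq_norm_sq]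
  have h5 : ⟪y, x⟫ = ⟪x, y⟫ := real_inner_comm _ _
  rw [h1, h3, h4, h2, h5]; ring

private lemma gfun_convex (y v a b a' b' : H) (t : ℝ) :
    gfun y v (a + t • (a' - a)) (b + t • (b' - b)) =
      (1-t) * gfun y v a b + t * gfun y v a' b'
        - t*(1-t)*(‖a' - a‖^2 + ‖b' - b‖^2)/2 := by
  simp only [gfun, inner_add_left, inner_add_right, real_inner_smul_left,
    real_inner_smul_right, inner_sub_left, inner_sub_right,
    convex_norm_sq t a a', convex_norm_sq t b b']
  ring

variable [CompleteSpace H]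

/-- Minty-type theorem: a maximally monotone operator on a real Hilbert space
satisfies `0 ∈ ran (I + A)`. -/
private theorem minty_zero (A : H → Set H)
    (hmono : ∀ x y u v : H, u ∈ A x → v ∈ A y → 0 ≤ ⟪u - v, x - y⟫)
    (hmax : ∀ x u : H, (∀ y v : H, v ∈ A y → 0 ≤ ⟪u - v, x - y⟫) → u ∈ A x) :
    ∃ x : H, -x ∈ A x := by
  obtain ⟨y₀, v₀, hy₀⟩ : ∃ y v, v ∈ A y := by
    by_contra h
    push_neg at h
    exact h 0 0 (hmax 0 0 fun y v hv => absurd hv (h y v))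
  -- the upper bound on `gfun · · p q` at graph points
  have hself : ∀ p q : H, q ∈ A p → ∀ y v : H, v ∈ A y →
      gfun y v p q ≤ ‖p + q‖^2/2 := by
    intro p q hq y v hv
    have h := hmono p y q v hq hv
    simp only [inner_sub_left, inner_sub_right] at h
    have e := norm_add_sq_real p q
    have c1 : ⟪q, p⟫ = ⟪p, q⟫ := real_inner_comm _ _
    have c2 : ⟪q, y⟫ = ⟪y, q⟫ := real_inner_comm _ _
    have c3 : ⟪v, p⟫ = ⟪p, v⟫ := real_inner_comm _ _
    have c4 : ⟪v, y⟫ = ⟪y, v⟫ := real_inner_comm _ _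
    simp only [gfun]
    linarith
  set U : Set ℝ := {r | ∃ a b : H, ∀ y v : H, v ∈ A y → gfun y v a b ≤ r} with hU
  have hUne : U.Nonempty := ⟨‖y₀ + v₀‖^2/2, y₀, v₀, fun y v hv => hself y₀ v₀ hy₀ y v hv⟩
  have hUbdd : BddBelow U := by
    refine ⟨-(‖y₀ + v₀‖^2/2), fun r hr => ?_⟩
    obtain ⟨a, b, hab⟩ := hr
    have h := hab y₀ v₀ hy₀
    simp only [gfun] at h
    have e1 : 0 ≤ ‖a + v₀‖^2 := sq_nonneg _
    have e2 : 0 ≤ ‖y₀ + b‖^2 := sq_nonneg _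
    rw [norm_add_sq_real] at e1 e2
    have e3 := norm_add_sq_real y₀ v₀
    have c1 : ⟪a, v₀⟫ = ⟪a, v₀⟫ := rfl
    linarith
  set m : ℝ := sInf U with hm
  have hmle : ∀ r ∈ U, m ≤ r := fun r hr => csInf_le hUbdd hr
  have happrox : ∀ n : ℕ, ∃ a b : H, ∀ y v : H, v ∈ A y →
      gfun y v a b ≤ m + 1/((n:ℝ)+1) := by
    intro n
    have hlt : m < m + 1/((n:ℝ)+1) := by
      have : (0:ℝ) < 1/((n:ℝ)+1) := by positivity
      linarith
    obtain ⟨r, hrU, hrlt⟩ := (csInf_lt_iff hUbdd hUne).mp hlt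
    obtain ⟨a, b, hab⟩ := hrU
    exact ⟨a, b, fun y v hv => (hab y v hv).trans hrlt.le⟩
  choose a b hab using happrox
  -- the minimizing sequence is Cauchy
  have hmid : ∀ n k : ℕ, ‖a k - a n‖^2 + ‖b k - b n‖^2
      ≤ 4*(1/((n:ℝ)+1) + 1/((k:ℝ)+1)) := by
    intro n k
    have hmem : (1/2)*(m + 1/((n:ℝ)+1)) + (1/2)*(m + 1/((k:ℝ)+1))
        - (‖a k - a n‖^2 + ‖b k - b n‖^2)/8 ∈ U := by
      refine ⟨a n + (1/2 : ℝ) • (a k - a n), b n + (1/2 : ℝ) • (b k - b n),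
        fun y v hv => ?_⟩
      rw [gfun_convex]
      have h1 := hab n y v hv
      have h2 := hab k y v hv
      linarith
    have := hmle _ hmem
    linarith
  have hcauchy : ∀ (c : ℕ → H), (∀ n k : ℕ, ‖c k - c n‖^2
      ≤ 4*(1/((n:ℝ)+1) + 1/((k:ℝ)+1))) → CauchySeq c := by
    intro c hc
    rw [Metric.cauchySeq_iff']
    intro ε hε
    obtain ⟨N, hN⟩ := exists_nat_gt (8/ε^2)
    refine ⟨N, fun n hn => ?_⟩
    have h := hc N n
    have h1 : 1/((n:ℝ)+1) ≤ 1/((N:ℝ)+1) := by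
      apply one_div_le_one_div_of_le
      · positivity
      · have : (N:ℝ) ≤ (n:ℝ) := by exact_mod_cast hn
        linarith
    have h2 : ‖c n - c N‖^2 ≤ 8/((N:ℝ)+1) := by
      have e : (8:ℝ)/((N:ℝ)+1) = 4*(1/((N:ℝ)+1) + 1/((N:ℝ)+1)) := by ring
      rw [e]
      linarith
    have h3 : 8/((N:ℝ)+1) < ε^2 := by
      have hN8 : (0:ℝ) < ε^2 := by positivity
      rw [div_lt_iff₀ (by positivity : (0:ℝ) < (N:ℝ)+1)]
      have h9 : 8/ε^2 < (N:ℝ) := hN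
      rw [div_lt_iff₀ hN8] at h9
      nlinarith
    rw [dist_eq_norm]
    have : ‖c n - c N‖^2 < ε^2 := lt_of_le_of_lt h2 h3
    exact lt_of_pow_lt_pow_left₀ 2 hε.le this
  have hca : CauchySeq a := hcauchy a (fun n k => by
    have := hmid n k
    nlinarith [sq_nonneg ‖b k - b n‖])
  have hcb : CauchySeq b := hcauchy b (fun n k => by
    have := hmid n k
    nlinarith [sq_nonneg ‖a k - a n‖])
  obtain ⟨xb, hxb⟩ := cauchySeq_tendsto_of_complete hca
  obtain ⟨ub, hub⟩ := cauchySeq_tendsto_of_complete hcb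
  -- the limit is an exact minimizer
  have hB : ∀ y v : H, v ∈ A y → gfun y v xb ub ≤ m := by
    intro y v hv
    have ht1 : Tendsto (fun n => gfun y v (a n) (b n)) atTop (𝓝 (gfun y v xb ub)) := by
      simp only [gfun]
      exact ((((hxb.inner tendsto_const_nhds).add
        (tendsto_const_nhds.inner hub)).sub tendsto_const_nhds).add
        ((hxb.norm.pow 2).div_const 2)).add ((hub.norm.pow 2).div_const 2)
    have ht2 : Tendsto (fun n : ℕ => m + 1/((n:ℝ)+1)) atTop (𝓝 m) := by
      simpa using tendsto_one_div_add_atTop_nhds_zero_nat.const_add m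
    exact le_of_tendsto_of_tendsto' ht1 ht2 (fun n => hab n y v hv)
  -- strong convexity inequality at the minimizer
  have hA : ∀ y v : H, v ∈ A y →
      ‖y - xb‖^2 + ‖v - ub‖^2 ≤ ‖y + v‖^2 - 2*m := by
    intro y v hv
    obtain ⟨D, hD⟩ : ∃ r : ℝ, r = ‖y - xb‖^2 + ‖v - ub‖^2 := ⟨_, rfl⟩
    obtain ⟨C, hC⟩ : ∃ r : ℝ, r = ‖y + v‖^2/2 - m := ⟨_, rfl⟩
    have hD0 : 0 ≤ D := by rw [hD]; positivity
    have hkey : ∀ t : ℝ, 0 < t → t < 1 → (1-t)*D ≤ 2*C := by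
      intro t ht0 ht1
      have hmem : (1-t)*m + t*(‖y + v‖^2/2)
          - t*(1-t)*(‖y - xb‖^2 + ‖v - ub‖^2)/2 ∈ U := by
        refine ⟨xb + t • (y - xb), ub + t • (v - ub), fun y' v' hv' => ?_⟩
        rw [gfun_convex]
        have h3 := mul_le_mul_of_nonneg_left (hB y' v' hv')
          (by linarith : (0:ℝ) ≤ 1-t)
        have h4 := mul_le_mul_of_nonneg_left (hself y v hv y' v' hv') ht0.le
        linarith
      have hle := hmle _ hmem
      rw [← hD] at hle
      have hCm : ‖y + v‖^2/2 = C + m := by rw [hC]; ring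
      rw [hCm] at hle
      have h6 : 0 ≤ t*(2*C - (1-t)*D) := by nlinarith [hle]
      by_contra hcon
      push_neg at hcon
      have h7 : 0 < t*((1-t)*D - 2*C) := mul_pos ht0 (by linarith)
      nlinarith [h6, h7]
    have hfin : D ≤ 2*C := by
      by_contra hcon
      push_neg at hcon
      have h12 := hkey (1/2) (by norm_num) (by norm_num)
      have hDpos : 0 < D := by linarith
      have hnum : 0 < D - 2*C := by linarith
      have ht0 : 0 < (D - 2*C)/(2*D) := div_pos hnum (by linarith)
      have ht1 : (D - 2*C)/(2*D) < 1 := by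
        rw [div_lt_one (by linarith)]
        linarith
      have hk := hkey _ ht0 ht1
      have e : (1 - (D - 2*C)/(2*D))*D = (D + 2*C)/2 := by
        field_simp
        ring
      rw [e] at hk
      linarith
    rw [hD, hC] at hfin
    linarith
  -- the reflected midpoint is monotonically related to the graph
  set s : H := (1/2 : ℝ) • (xb - ub) with hs
  have hrel : ∀ y v : H, v ∈ A y → 0 ≤ ⟪-s - v, s - y⟫ := by
    intro y v hv
    have h1 := hB y v hv
    have h2 := hA y v hv
    simp only [gfun] at h1
    have e1 := norm_add_sq_real y v
    have e2 := norm_sub_sq_real y xb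
    have e3 := norm_sub_sq_real v ub
    have e5 : 0 ≤ ‖xb + ub‖^2 := sq_nonneg _
    rw [norm_add_sq_real] at e5
    have e4 : ⟪-s - v, s - y⟫ =
        -(⟪s, s⟫) + ⟪s, y⟫ - ⟪v, s⟫ + ⟪v, y⟫ := by
      simp only [inner_sub_left, inner_sub_right, inner_neg_left]
      ring
    have e6 : ⟪s, s⟫ = (1/4) * (‖xb‖^2 - 2*⟪xb, ub⟫ + ‖ub‖^2) := by
      simp only [hs, real_inner_smul_left, real_inner_smul_right, inner_sub_left,
        inner_sub_right]
      rw [real_inner_comm ub xb]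
      simp only [real_inner_self_eq_norm_sq]
      ring
    have e7 : ⟪s, y⟫ = (1/2) * (⟪xb, y⟫ - ⟪ub, y⟫) := by
      simp only [hs, real_inner_smul_left, inner_sub_left]
      try ring
    have e8 : ⟪v, s⟫ = (1/2) * (⟪v, xb⟫ - ⟪v, ub⟫) := by
      simp only [hs, real_inner_smul_right, inner_sub_right]
      try ring
    have c1 : ⟪xb, y⟫ = ⟪y, xb⟫ := real_inner_comm _ _
    have c2 : ⟪ub, y⟫ = ⟪y, ub⟫ := real_inner_comm _ _
    have c3 : ⟪v, xb⟫ = ⟪xb, v⟫ := real_inner_comm _ _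
    have c4 : ⟪v, y⟫ = ⟪y, v⟫ := real_inner_comm _ _
    rw [e4, e6, e7, e8, c1, c2, c3, c4]
    linarith
  exact ⟨s, hmax s (-s) hrel⟩

/-- Surjectivity of `I + βG` for a maximally monotone `G` and `β > 0`. -/
private theorem resolvent_exists (G : H → Set H)
    (hGmono : ∀ x y g h : H, g ∈ G x → h ∈ G y → 0 ≤ ⟪g - h, x - y⟫)
    (hGmax : ∀ x u : H, (∀ y h : H, h ∈ G y → 0 ≤ ⟪u - h, x - y⟫) → u ∈ G x)
    (β : ℝ) (hβ : 0 < β) (z : H) :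
    ∃ y g : H, g ∈ G y ∧ y + β • g = z := by
  set A : H → Set H := fun y => (fun h => β • h - z) '' (G y) with hA
  have hmono : ∀ x y u v : H, u ∈ A x → v ∈ A y → 0 ≤ ⟪u - v, x - y⟫ := by
    rintro x y u v ⟨g, hg, rfl⟩ ⟨h, hh, rfl⟩
    have : β • g - z - (β • h - z) = β • (g - h) := by
      rw [smul_sub]; abel
    rw [this, real_inner_smul_left]
    exact mul_nonneg hβ.le (hGmono x y g h hg hh)
  have hmax : ∀ x u : H, (∀ y v : H, v ∈ A y → 0 ≤ ⟪u - v, x - y⟫) → u ∈ A x := by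
    intro x u hrel
    have hg : β⁻¹ • (u + z) ∈ G x := by
      apply hGmax
      intro y h hh
      have h1 := hrel y (β • h - z) ⟨h, hh, rfl⟩
      have e : u - (β • h - z) = β • (β⁻¹ • (u + z) - h) := by
        rw [smul_sub, smul_smul, mul_inv_cancel₀ hβ.ne', one_smul]; abel
      rw [e, real_inner_smul_left] at h1
      by_contra hneg
      push_neg at hneg
      nlinarith [h1, hβ, hneg]
    refine ⟨β⁻¹ • (u + z), hg, ?_⟩
    show β • (β⁻¹ • (u + z)) - z = u
    rw [smul_smul, mul_inv_cancel₀ hβ.ne', one_smul]; abel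
  obtain ⟨s, hsm⟩ := minty_zero A hmono hmax
  obtain ⟨g, hg, hEq⟩ := hsm
  refine ⟨s, g, hg, ?_⟩
  have hEq' : β • g - z = -s := hEq
  have h3 : β • g = -s + z := by rw [← hEq']; abel
  rw [h3]; abel

end Aux

set_option maxHeartbeats 1600000 in
/-- If `F` is `L`-Lipschitz, `G` is maximally monotone and `T = F + G` is `ρ`-comonotone with
`ρ > −1/(2L)`, then `(1/(2L))·T` is maximally `2Lρ`-comonotone. -/
theorem half_invL_sum_maximally_comonotone
    {H : Type*} [NormedAddCommGroup H] [InnerProductSpace ℝ H] [CompleteSpace H]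
    (L ρ : ℝ) (F : H → H) (G T S : H → Set H)
    (hL : 0 < L) (hρ : -1/(2*L) < ρ)
    (hLip : ∀ x y : H, ‖F x - F y‖ ≤ L * ‖x - y‖)
    (hGmono : ∀ x y g h : H, g ∈ G x → h ∈ G y → 0 ≤ ⟪g - h, x - y⟫)
    (hGmax : ∀ x u : H, (∀ y h : H, h ∈ G y → 0 ≤ ⟪u - h, x - y⟫) → u ∈ G x)
    (hT : ∀ x w : H, w ∈ T x ↔ ∃ g ∈ G x, w = F x + g)
    (hTcomono : ∀ x y u v : H, u ∈ T x → v ∈ T y →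
      ρ * ‖u - v‖^2 ≤ ⟪u - v, x - y⟫)
    (hS : ∀ x w : H, w ∈ S x ↔ ∃ u ∈ T x, w = (1/(2*L)) • u) :
    (∀ x y u v : H, u ∈ S x → v ∈ S y →
      (2*L*ρ) * ‖u - v‖^2 ≤ ⟪u - v, x - y⟫) ∧
    (∀ x u : H, (∀ y v : H, v ∈ S y → (2*L*ρ) * ‖u - v‖^2 ≤ ⟪u - v, x - y⟫) →
      u ∈ S x) := by
  have hL2 : (0:ℝ) < 2*L := by linarith
  set γ : ℝ := 1/(2*L) with hγdef
  have hγ : 0 < γ := by positivity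
  have hγL : γ * (2*L) = 1 := by
    rw [hγdef]; field_simp
  constructor
  · -- comonotonicity of S
    intro x y u v hu hv
    obtain ⟨u', hu', rfl⟩ := (hS x u).mp hu
    obtain ⟨v', hv', rfl⟩ := (hS y v).mp hv
    have hco := hTcomono x y u' v' hu' hv'
    have e0 : (1/(2*L)) • u' - (1/(2*L)) • v' = γ • (u' - v') := by
      rw [smul_sub]
    rw [e0]
    have e1 : ‖γ • (u' - v')‖^2 = γ^2 * ‖u' - v'‖^2 := by
      rw [norm_smul, mul_pow, Real.norm_eq_abs, sq_abs]
    have e2 : ⟪γ • (u' - v'), x - y⟫ = γ * ⟪u' - v', x - y⟫ :=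
      real_inner_smul_left _ _ _
    rw [e1, e2]
    have e3 : 2*L*ρ*(γ^2*‖u' - v'‖^2) = γ*(ρ*‖u' - v'‖^2) := by
      rw [hγdef]; field_simp; try ring
    calc 2*L*ρ*(γ^2*‖u' - v'‖^2) = γ*(ρ*‖u' - v'‖^2) := e3
      _ ≤ γ * ⟪u' - v', x - y⟫ := mul_le_mul_of_nonneg_left hco hγ.le
  · -- maximality
    intro x u hu
    set w : H := (2*L) • u with hw
    have huw : u = γ • w := by
      rw [hw, smul_smul, hγL, one_smul]
    -- transfer the relation to T
    have hrelT : ∀ y v' : H, v' ∈ T y → ρ * ‖w - v'‖^2 ≤ ⟪w - v', x - y⟫ := by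
      intro y v' hv'
      have hvS : (1/(2*L)) • v' ∈ S y := (hS y _).mpr ⟨v', hv', rfl⟩
      have h := hu y _ hvS
      have e0 : u - (1/(2*L)) • v' = γ • (w - v') := by
        rw [smul_sub, ← huw]
      rw [e0] at h
      have e1 : ‖γ • (w - v')‖^2 = γ^2 * ‖w - v'‖^2 := by
        rw [norm_smul, mul_pow, Real.norm_eq_abs, sq_abs]
      have e2 : ⟪γ • (w - v'), x - y⟫ = γ * ⟪w - v', x - y⟫ :=
        real_inner_smul_left _ _ _
      rw [e1, e2] at h
      have e3 : 2*L*ρ*(γ^2*‖w - v'‖^2) = γ*(ρ*‖w - v'‖^2) := by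
        rw [hγdef]; field_simp; try ring
      rw [← mul_assoc, mul_assoc (2*L*ρ), e3] at h
      exact le_of_mul_le_mul_left h hγ
    -- resolvent of G with parameter γ
    have hres : ∀ c : H, ∃ y g : H, g ∈ G y ∧ y + γ • g = c :=
      fun c => resolvent_exists G hGmono hGmax γ hγ c
    choose r rg hrg hr using hres
    have hnon : ∀ c c' : H, ‖r c - r c'‖ ≤ ‖c - c'‖ := by
      intro c c'
      have hm := hGmono (r c) (r c') (rg c) (rg c') (hrg c) (hrg c')
      have key : ‖r c - r c'‖^2 ≤ ⟪r c - r c', c - c'⟫ := by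
        have e : c - c' = (r c - r c') + γ • (rg c - rg c') := by
          have e0 : (r c + γ • rg c) - (r c' + γ • rg c')
              = (r c - r c') + γ • (rg c - rg c') := by
            rw [smul_sub]; abel
          rw [hr c, hr c'] at e0
          exact e0
        rw [e, inner_add_right, real_inner_self_eq_norm_sq, real_inner_smul_right]
        have hcomm : ⟪r c - r c', rg c - rg c'⟫ = ⟪rg c - rg c', r c - r c'⟫ :=
          real_inner_comm _ _
        nlinarith [mul_nonneg hγ.le hm]
      nlinarith [real_inner_le_norm (r c - r c') (c - c'), norm_nonneg (r c - r c'),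
        norm_nonneg (c - c')]
    set z₀ : H := x + γ • w with hz₀
    set Φ : H → H := fun y => r (z₀ - γ • F y) with hΦ
    have hlip : LipschitzWith (1/2 : NNReal) Φ := by
      apply LipschitzWith.of_dist_le_mul
      intro y y'
      rw [dist_eq_norm, dist_eq_norm]
      have h1 : ‖Φ y - Φ y'‖ ≤ ‖(z₀ - γ • F y) - (z₀ - γ • F y')‖ := hnon _ _
      have e : (z₀ - γ • F y) - (z₀ - γ • F y') = γ • (F y' - F y) := by
        rw [smul_sub]; abel
      rw [e, norm_smul, Real.norm_eq_abs, abs_of_pos hγ] at h1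
      have h2 : ‖F y' - F y‖ ≤ L * ‖y' - y‖ := hLip y' y
      have h3 : ‖y' - y‖ = ‖y - y'‖ := norm_sub_rev _ _
      have h4 : ((1/2 : NNReal) : ℝ) = 1/2 := by norm_num
      rw [h4]
      have : γ * (L * ‖y - y'‖) = (1/2) * ‖y - y'‖ := by
        rw [hγdef]; field_simp
      nlinarith [norm_nonneg (y - y'), mul_le_mul_of_nonneg_left h2 hγ.le]
    have hcontr : ContractingWith (1/2) Φ := by
      refine ⟨?_, hlip⟩
      rw [show ((1:NNReal)/2) = (2:NNReal)⁻¹ by norm_num, ← NNReal.coe_lt_coe]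
      norm_num
    have : Nonempty H := ⟨0⟩
    set y₁ : H := ContractingWith.fixedPoint Φ hcontr with hy₁
    have hfix : Φ y₁ = y₁ := hcontr.fixedPoint_isFixedPt
    set c₁ : H := z₀ - γ • F y₁ with hc₁
    have hrc : r c₁ = y₁ := hfix
    have hg₁ : rg c₁ ∈ G y₁ := by rw [← hrc]; exact hrg c₁
    have heq : y₁ + γ • (F y₁ + rg c₁) = z₀ := by
      have := hr c₁
      rw [hrc] at this
      rw [smul_add]
      have e : y₁ + (γ • F y₁ + γ • rg c₁) = (y₁ + γ • rg c₁) + γ • F y₁ := by abel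
      rw [e, this, hc₁]
      abel
    clear_value γ w z₀ Φ y₁ c₁
    set v₁ : H := F y₁ + rg c₁ with hv₁
    have hv₁T : v₁ ∈ T y₁ := (hT y₁ v₁).mpr ⟨rg c₁, hg₁, rfl⟩
    have hxy : x - y₁ = γ • (v₁ - w) := by
      have h0 : y₁ + γ • v₁ = x + γ • w := by rw [heq, hz₀]
      have h1 : x = y₁ + γ • v₁ - γ • w := by rw [h0]; abel
      rw [h1, smul_sub]; abel
    have hco := hrelT y₁ v₁ hv₁T
    rw [hxy] at hco
    have e1 : ⟪w - v₁, γ • (v₁ - w)⟫ = -(γ * ‖w - v₁‖^2) := by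
      rw [real_inner_smul_right]
      have : v₁ - w = -(w - v₁) := by abel
      rw [this, inner_neg_right, real_inner_self_eq_norm_sq]
      ring
    rw [e1] at hco
    have hργ : 0 < ρ + γ := by
      rw [hγdef]
      have : -(1/(2*L)) < ρ := by
        have := hρ
        rw [neg_div] at this
        exact this
      linarith
    have hwv : ‖w - v₁‖^2 ≤ 0 := by nlinarith
    have hwv0 : w - v₁ = 0 := by
      have h00 : ‖w - v₁‖^2 = 0 := le_antisymm hwv (sq_nonneg _)
      have h0 : ‖w - v₁‖ = 0 := by
        nlinarith [norm_nonneg (w - v₁)]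
      exact norm_eq_zero.mp h0
    have hwv1 : w = v₁ := sub_eq_zero.mp hwv0
    have hxy1 : x = y₁ := by
      apply sub_eq_zero.mp
      rw [hxy, ← hwv1, sub_self, smul_zero]
    have hwT : w ∈ T x := by rw [hxy1, hwv1]; exact hv₁T
    exact (hS x u).mpr ⟨w, hwT, huw⟩
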